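/- Let L : ℝ^p → ℝ be L_smooth-smooth and bounded below by 0, and let {x_t} be generated by gradient descent x_{t+1} = x_t − η_t ∇L(x_t) with positive step sizes satisfying η_t ≤ 1/L_smooth for all t ≥ T₀, ∑ η_t = ∞, and ∑ η_t² < ∞. Then ∑_{t≥T₀} η_t ‖∇L(x_t)‖² < ∞ and consequently liminf_{t→∞} ‖∇L(x_t)‖ = 0; moreover L(x_t) converges to a finite limit. -/

import Mathlib

open Filter

/-- Descent lemma: for a function with `Ls`-Lipschitz gradient,
`L (x + v) ≤ L x + ⟪∇L x, v⟫ + Ls/2 * ‖v‖²`. -/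
lemma descent_lemma_aux {p : ℕ} (L : EuclideanSpace ℝ (Fin p) → ℝ)
    (hdiff : Differentiable ℝ L) (Ls : ℝ)
    (hlip : ∀ x y, ‖gradient L x - gradient L y‖ ≤ Ls * ‖x - y‖)
    (x v : EuclideanSpace ℝ (Fin p)) :
    L (x + v) ≤ L x + (inner ℝ (gradient L x) v : ℝ) + Ls / 2 * ‖v‖ ^ 2 := by
  set c1 : ℝ := (inner ℝ (gradient L x) v : ℝ) with hc1
  set c2 : ℝ := Ls * ‖v‖ ^ 2 / 2 with hc2
  have hφ : ∀ s : ℝ, HasDerivAt (fun s : ℝ => L (x + s • v))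
      ((inner ℝ (gradient L (x + s • v)) v : ℝ)) s := by
    intro s
    have hc : HasDerivAt (fun s : ℝ => x + s • v) v s := by
      simpa using ((hasDerivAt_id s).smul_const v).const_add x
    have hL := ((hdiff (x + s • v)).hasGradientAt).hasFDerivAt
    have := hL.comp_hasDerivAt s hc
    simpa [InnerProductSpace.toDual_apply_apply, Function.comp_def] using this
  set ψ : ℝ → ℝ := fun s => L (x + s • v) - s * c1 - c2 * s ^ 2 with hψ
  have hψd : ∀ s : ℝ, HasDerivAt ψ
      ((inner ℝ (gradient L (x + s • v)) v : ℝ) - c1 - c2 * (2 * s)) s := by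
    intro s
    have h1 : HasDerivAt (fun s : ℝ => s * c1) c1 s := by
      simpa using (hasDerivAt_id s).mul_const c1
    have h2 : HasDerivAt (fun s : ℝ => c2 * s ^ 2) (c2 * (2 * s)) s := by
      have := (hasDerivAt_pow 2 s).const_mul c2
      simpa [mul_comm] using this
    exact ((hφ s).sub h1).sub h2
  have hanti : AntitoneOn ψ (Set.Icc (0:ℝ) 1) := by
    apply antitoneOn_of_deriv_nonpos (convex_Icc 0 1)
    · exact fun s _ => ((hψd s).continuousAt).continuousWithinAt
    · exact fun s _ => ((hψd s).differentiableAt).differentiableWithinAt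
    · intro s hs
      rw [interior_Icc] at hs
      rw [(hψd s).deriv]
      have hineq : (inner ℝ (gradient L (x + s • v)) v : ℝ) - c1 ≤ Ls * s * ‖v‖ ^ 2 := by
        have h1 : (inner ℝ (gradient L (x + s • v)) v : ℝ) - c1
            = (inner ℝ (gradient L (x + s • v) - gradient L x) v : ℝ) := by
          rw [hc1, inner_sub_left]
        rw [h1]
        calc (inner ℝ (gradient L (x + s • v) - gradient L x) v : ℝ)
            ≤ ‖gradient L (x + s • v) - gradient L x‖ * ‖v‖ := real_inner_le_norm _ _
          _ ≤ (Ls * ‖x + s • v - x‖) * ‖v‖ := by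
              exact mul_le_mul_of_nonneg_right (hlip _ _) (norm_nonneg _)
          _ = Ls * s * ‖v‖ ^ 2 := by
              have : ‖x + s • v - x‖ = s * ‖v‖ := by
                simp [norm_smul, abs_of_pos hs.1]
              rw [this]; ring
      have : c2 * (2 * s) = Ls * s * ‖v‖ ^ 2 := by rw [hc2]; ring
      linarith
  have h01 : ψ 1 ≤ ψ 0 :=
    hanti (by simp : (0:ℝ) ∈ Set.Icc (0:ℝ) 1) (by simp : (1:ℝ) ∈ Set.Icc (0:ℝ) 1)
      zero_le_one
  have h0 : ψ 0 = L x := by simp [hψ]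
  have h1 : ψ 1 = L (x + v) - c1 - c2 := by simp [hψ]
  rw [h0, h1] at h01
  have : c2 = Ls / 2 * ‖v‖ ^ 2 := by rw [hc2]; ring
  linarith

/-- Convergence of gradient descent under Robbins–Monro step sizes: for a
smooth nonnegative objective, `∑_{t≥T₀} η_t ‖∇L(x_t)‖² < ∞`, the liminf of the
gradient norms is `0`, and the loss values converge to a finite limit. -/
theorem stmt_7 {p : ℕ} (L : EuclideanSpace ℝ (Fin p) → ℝ)
    (hdiff : Differentiable ℝ L) (Ls : ℝ) (hLs : 0 < Ls)
    (hlip : ∀ x y, ‖gradient L x - gradient L y‖ ≤ Ls * ‖x - y‖)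
    (hpos : ∀ x, 0 ≤ L x)
    (η : ℕ → ℝ) (hηpos : ∀ t, 0 < η t)
    (hdiv : ¬ Summable η) (hsq : Summable (fun t => η t ^ 2))
    (T₀ : ℕ) (hT₀ : ∀ t ≥ T₀, η t ≤ 1 / Ls)
    (x : ℕ → EuclideanSpace ℝ (Fin p))
    (hstep : ∀ t, x (t + 1) = x t - η t • gradient L (x t)) :
    Summable (fun t : ℕ => η (t + T₀) * ‖gradient L (x (t + T₀))‖ ^ 2) ∧
    Filter.liminf (fun t => ‖gradient L (x t)‖) Filter.atTop = 0 ∧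
    ∃ l : ℝ, Filter.Tendsto (fun t => L (x t)) Filter.atTop (nhds l) := by
  set g : ℕ → EuclideanSpace ℝ (Fin p) := fun t => gradient L (x t) with hg
  set a : ℕ → ℝ := fun t => L (x t) with ha
  -- key one-step decrease for t ≥ T₀
  have hkey : ∀ t, t ≥ T₀ → a (t + 1) + η t / 2 * ‖g t‖ ^ 2 ≤ a t := by
    intro t ht
    have hdl := descent_lemma_aux L hdiff Ls hlip (x t) (-(η t • g t))
    have hx1 : x (t + 1) = x t + -(η t • g t) := by
      rw [hstep t]; abel
    rw [← hx1] at hdl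
    have hinner : (inner ℝ (gradient L (x t)) (-(η t • g t)) : ℝ) = -(η t * ‖g t‖ ^ 2) := by
      rw [inner_neg_right, real_inner_smul_right, real_inner_self_eq_norm_sq]
    have hnorm : ‖-(η t • g t)‖ ^ 2 = η t ^ 2 * ‖g t‖ ^ 2 := by
      rw [norm_neg, norm_smul]
      rw [Real.norm_eq_abs, mul_pow, sq_abs]
    rw [hinner, hnorm] at hdl
    have hη1 : Ls * η t ≤ 1 := by
      have := hT₀ t ht
      rw [le_div_iff₀ hLs] at this
      linarith [this]
    have hηt := hηpos t
    have hgnn : (0:ℝ) ≤ ‖g t‖ ^ 2 := sq_nonneg _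
    nlinarith [hdl]
  have hanonneg : ∀ t, 0 ≤ a t := fun t => hpos (x t)
  -- summability
  have hsum : Summable (fun t : ℕ => η (t + T₀) * ‖g (t + T₀)‖ ^ 2) := by
    apply summable_of_sum_range_le (c := 2 * a T₀)
    · intro n
      exact mul_nonneg (hηpos _).le (sq_nonneg _)
    · intro n
      have htel : ∀ N : ℕ, (∑ t ∈ Finset.range N, η (t + T₀) / 2 * ‖g (t + T₀)‖ ^ 2)
          ≤ a T₀ - a (N + T₀) := by
        intro N
        induction N with
        | zero => simp
        | succ N ih =>
          rw [Finset.sum_range_succ]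
          have := hkey (N + T₀) (Nat.le_add_left _ _)
          have h2 : N + T₀ + 1 = N + 1 + T₀ := by ring
          rw [h2] at this
          linarith
      have := htel n
      have h2 : (∑ t ∈ Finset.range n, η (t + T₀) * ‖g (t + T₀)‖ ^ 2)
          = 2 * ∑ t ∈ Finset.range n, η (t + T₀) / 2 * ‖g (t + T₀)‖ ^ 2 := by
        rw [Finset.mul_sum]; congr 1; ext t; ring
      rw [h2]
      have := hanonneg (n + T₀)
      linarith [htel n]
  refine ⟨hsum, ?_, ?_⟩
  · -- liminf = 0
    have hbdd : IsBoundedUnder (· ≥ ·) atTop (fun t => ‖g t‖) :=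
      isBoundedUnder_of ⟨0, fun t => norm_nonneg _⟩
    have hfreq : ∀ ε : ℝ, 0 < ε → ∃ᶠ t in atTop, ‖g t‖ < ε := by
      intro ε hε
      by_contra hcon
      rw [Filter.not_frequently] at hcon
      simp only [not_lt] at hcon
      rw [eventually_atTop] at hcon
      obtain ⟨N, hN⟩ := hcon
      have hsum2 : Summable (fun t : ℕ => η (t + N + T₀) * ‖g (t + N + T₀)‖ ^ 2) := by
        have := (summable_nat_add_iff (f := fun t : ℕ => η (t + T₀) * ‖g (t + T₀)‖ ^ 2) N).2 hsum
        simpa using this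
      have hsum3 : Summable (fun t : ℕ => ε ^ 2 * η (t + N + T₀)) := by
        apply Summable.of_nonneg_of_le (fun t => mul_nonneg (sq_nonneg ε) (hηpos _).le)
          (fun t => ?_) hsum2
        have hge : ε ≤ ‖g (t + N + T₀)‖ := hN (t + N + T₀) (by omega)
        have h2 : ε ^ 2 ≤ ‖g (t + N + T₀)‖ ^ 2 := by nlinarith
        have hηnn := (hηpos (t + N + T₀)).le
        calc ε ^ 2 * η (t + N + T₀) ≤ ‖g (t + N + T₀)‖ ^ 2 * η (t + N + T₀) :=
              mul_le_mul_of_nonneg_right h2 hηnn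
          _ = η (t + N + T₀) * ‖g (t + N + T₀)‖ ^ 2 := by ring
      have hsum4 : Summable (fun t : ℕ => η (t + (N + T₀))) := by
        have := (summable_mul_left_iff (f := fun t : ℕ => η (t + N + T₀))
          (a := ε ^ 2) (by positivity)).1 hsum3
        simpa [add_assoc] using this
      exact hdiv ((summable_nat_add_iff (N + T₀)).1 hsum4)
    have hupper : ∀ ε : ℝ, 0 < ε → liminf (fun t => ‖g t‖) atTop ≤ ε := fun ε hε =>
      liminf_le_of_frequently_le ((hfreq ε hε).mono fun t h => h.le) hbdd
    have hcobdd : IsCoboundedUnder (· ≥ ·) atTop (fun t => ‖g t‖) := by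
      refine ⟨1, fun a ha => ?_⟩
      rw [Filter.eventually_map] at ha
      obtain ⟨t, ht1, ht2⟩ := ((hfreq 1 one_pos).and_eventually ha).exists
      exact le_trans ht2 ht1.le
    have hlower : (0:ℝ) ≤ liminf (fun t => ‖g t‖) atTop :=
      le_liminf_of_le hcobdd (Filter.Eventually.of_forall fun t => norm_nonneg _)
    refine le_antisymm ?_ hlower
    by_contra h
    push_neg at h
    have := hupper (liminf (fun t => ‖g t‖) atTop / 2) (by linarith)
    linarith
  · -- convergence of the loss
    have hantit : Antitone (fun t => a (t + T₀)) := by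
      apply antitone_nat_of_succ_le
      intro n
      have := hkey (n + T₀) (Nat.le_add_left _ _)
      have hnn : 0 ≤ η (n + T₀) / 2 * ‖g (n + T₀)‖ ^ 2 :=
        mul_nonneg (by linarith [hηpos (n + T₀)]) (sq_nonneg _)
      have h2 : n + T₀ + 1 = n + 1 + T₀ := by ring
      rw [h2] at this
      linarith
    have hbdd : BddBelow (Set.range fun t => a (t + T₀)) :=
      ⟨0, fun y ⟨t, ht⟩ => ht ▸ hanonneg (t + T₀)⟩
    have htendsto := tendsto_atTop_ciInf hantit hbdd
    exact ⟨_, (tendsto_add_atTop_iff_nat T₀).1 htendsto⟩
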